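/- Kloosterman sum with one argument divisible by the modulus: if q is prime, gcd(c, q) = 1 and gcd(cr/l, q) = 1, then S(n, q·h·r; q·c·r/l) = S(n·q̄, h·r; c·r/l) · S(0, n; q), where q̄ is an inverse of q modulo cr/l, S(0, n; q) is the Ramanujan sum. -/

import Mathlib

open Complex Finset

/-- `e(x) = exp(2πix)`. -/
noncomputable def e (x : ℝ) : ℂ := Complex.exp (2 * Real.pi * Complex.I * x)

/-- Additive character `x ↦ e(x/c)` on `ZMod c`. -/
noncomputable def eZMod (c : ℕ) [NeZero c] (x : ZMod c) : ℂ := e ((x.val : ℝ) / c)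

lemma e_add (x y : ℝ) : e (x + y) = e x * e y := by
  simp [e, mul_add, Complex.exp_add]

lemma e_int (k : ℤ) : e k = 1 := by
  simp [e]
  rw [show 2 * (Real.pi:ℂ) * Complex.I * k = k * (2 * Real.pi * Complex.I) by ring]
  exact Complex.exp_int_mul_two_pi_mul_I k

lemma e_sub_int (x : ℝ) (k : ℤ) : e (x - k) = e x := by
  have := e_add (x - k) k
  simp [e_int] at this
  simpa using this.symm

lemma eZMod_intCast (c : ℕ) [NeZero c] (m : ℤ) : eZMod c (m : ZMod c) = e (m / c) := by
  have hv : (((m : ZMod c).val : ℤ)) = m % c := ZMod.val_intCast m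
  have hc : (c:ℝ) ≠ 0 := Nat.cast_ne_zero.2 (NeZero.ne c)
  unfold eZMod
  have : ((m : ZMod c).val : ℝ) = (m:ℝ) - c * ((m / c : ℤ) : ℝ) := by
    have : ((m % c : ℤ) : ℝ) = (m:ℝ) - c * ((m / c : ℤ) : ℝ) := by
      have h2 := Int.emod_add_mul_ediv m c
      have h3 : ((m % c : ℤ):ℝ) + (c:ℝ) * ((m / c : ℤ) : ℝ) = (m:ℝ) := by
        exact_mod_cast congrArg (fun z : ℤ => (z:ℝ)) h2
      linarith
    rw [← this]
    exact_mod_cast congrArg (fun z : ℤ => (z : ℝ)) hv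
  rw [this]
  rw [show ((m:ℝ) - c * ((m / c : ℤ) : ℝ)) / c = (m:ℝ)/c - ((m / c : ℤ) : ℝ) by field_simp]
  exact e_sub_int _ _


/-- Kloosterman sum `S(n,m;c) = ∑*_{h mod c} e((nh + m·h̄)/c)`. -/
noncomputable def kloos (c : ℕ) [NeZero c] (n m : ℤ) : ℂ :=
  ∑ h : (ZMod c)ˣ,
    eZMod c ((n : ZMod c) * (h : ZMod c) + (m : ZMod c) * ((h⁻¹ : (ZMod c)ˣ) : ZMod c))

lemma eZMod_split (q c' : ℕ) [NeZero q] [NeZero c'] (u v : ℤ) (huv : u * c' + v * q = 1)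
    (x : ZMod (q * c')) :
    haveI : NeZero (q * c') := ⟨mul_ne_zero (NeZero.ne q) (NeZero.ne c')⟩
    eZMod (q * c') x
      = eZMod q ((u : ZMod q) * ZMod.castHom (dvd_mul_right q c') (ZMod q) x)
        * eZMod c' ((v : ZMod c') * ZMod.castHom (dvd_mul_left c' q) (ZMod c') x) := by
  haveI : NeZero (q * c') := ⟨mul_ne_zero (NeZero.ne q) (NeZero.ne c')⟩
  set m : ℤ := (x.val : ℤ) with hm
  have hx : (m : ZMod (q * c')) = x := by simp [hm]
  have h1 : (ZMod.castHom (dvd_mul_right q c') (ZMod q)) x = ((m : ℤ) : ZMod q) := by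
    rw [← hx]; simp
  have h2 : (ZMod.castHom (dvd_mul_left c' q) (ZMod c')) x = ((m : ℤ) : ZMod c') := by
    rw [← hx]; simp
  rw [h1, h2]
  rw [show (u : ZMod q) * ((m : ℤ) : ZMod q) = ((u * m : ℤ) : ZMod q) by push_cast; ring]
  rw [show (v : ZMod c') * ((m : ℤ) : ZMod c') = ((v * m : ℤ) : ZMod c') by push_cast; ring]
  rw [eZMod_intCast, eZMod_intCast, ← e_add]
  have hq : (q:ℝ) ≠ 0 := Nat.cast_ne_zero.2 (NeZero.ne q)
  have hc : (c':ℝ) ≠ 0 := Nat.cast_ne_zero.2 (NeZero.ne c')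
  have heq : ((u * m : ℤ):ℝ) / q + ((v * m : ℤ):ℝ) / c' = (x.val : ℝ) / (q * c') := by
    have hb : (u:ℝ) * c' + v * q = 1 := by exact_mod_cast congrArg (fun z : ℤ => (z:ℝ)) huv
    have hmr : ((u * m : ℤ):ℝ) = u * m := by push_cast; ring
    have hmr2 : ((v * m : ℤ):ℝ) = v * m := by push_cast; ring
    have hmm : (m:ℝ) = (x.val : ℝ) := by simp [hm]
    rw [hmr, hmr2, ← hmm]
    field_simp
    ring_nf
    nlinarith [hb, sq_nonneg ((m:ℝ))]
  unfold eZMod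
  rw [show (((q * c' : ℕ)):ℝ) = (q:ℝ) * c' by push_cast; ring, ← heq]

lemma kloos_mul_eq (q c' : ℕ) [NeZero q] [NeZero c'] (hco : Nat.Coprime q c')
    (n h' u v : ℤ) (huv : u * c' + v * q = 1) :
    haveI : NeZero (q * c') := ⟨mul_ne_zero (NeZero.ne q) (NeZero.ne c')⟩
    kloos (q * c') n (q * h') = kloos c' (n * v) h' * kloos q 0 n := by
  haveI : NeZero (q * c') := ⟨mul_ne_zero (NeZero.ne q) (NeZero.ne c')⟩
  set π₁ := ZMod.castHom (dvd_mul_right q c') (ZMod q) with hπ₁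
  set π₂ := ZMod.castHom (dvd_mul_left c' q) (ZMod c') with hπ₂
  let Φ : (ZMod (q * c'))ˣ ≃* (ZMod q)ˣ × (ZMod c')ˣ :=
    (Units.mapEquiv (ZMod.chineseRemainder hco).toMulEquiv).trans MulEquiv.prodUnits
  have hΦ1 : ∀ t : (ZMod (q * c'))ˣ, (((Φ t).1 : (ZMod q)ˣ) : ZMod q) = π₁ (t : ZMod (q * c')) := by
    intro t
    simp [Φ, MulEquiv.prodUnits, ZMod.chineseRemainder, hπ₁, ZMod.castHom_apply]
  have hΦ2 : ∀ t : (ZMod (q * c'))ˣ, (((Φ t).2 : (ZMod c')ˣ) : ZMod c') = π₂ (t : ZMod (q * c')) := by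
    intro t
    simp [Φ, MulEquiv.prodUnits, ZMod.chineseRemainder, hπ₂, ZMod.castHom_apply]
  set m : ℤ := q * h' with hmdef
  let f : (ZMod q)ˣ → ℂ := fun a =>
    eZMod q ((u : ZMod q) * ((n : ZMod q) * a + ((m : ℤ) : ZMod q) * ((a⁻¹ : (ZMod q)ˣ) : ZMod q)))
  let g : (ZMod c')ˣ → ℂ := fun b =>
    eZMod c' ((v : ZMod c') * ((n : ZMod c') * b + ((m : ℤ) : ZMod c') * ((b⁻¹ : (ZMod c')ˣ) : ZMod c')))
  have hterm : ∀ t : (ZMod (q * c'))ˣ,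
      eZMod (q * c') ((n : ZMod (q * c')) * t + ((m : ℤ) : ZMod (q * c')) * ((t⁻¹ : (ZMod (q * c'))ˣ) : ZMod (q * c')))
        = f (Φ t).1 * g (Φ t).2 := by
    intro t
    rw [eZMod_split q c' u v huv]
    have e1 : π₁ ((n : ZMod (q * c')) * t + ((m : ℤ) : ZMod (q * c')) * ((t⁻¹ : (ZMod (q * c'))ˣ) : ZMod (q * c')))
        = (n : ZMod q) * (Φ t).1 + ((m : ℤ) : ZMod q) * (((Φ t).1⁻¹ : (ZMod q)ˣ) : ZMod q) := by
      rw [map_add, map_mul, map_mul, map_intCast, map_intCast, ← hΦ1 t, ← hΦ1 t⁻¹]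
      rw [map_inv Φ t]
      rfl
    have e2 : π₂ ((n : ZMod (q * c')) * t + ((m : ℤ) : ZMod (q * c')) * ((t⁻¹ : (ZMod (q * c'))ˣ) : ZMod (q * c')))
        = (n : ZMod c') * (Φ t).2 + ((m : ℤ) : ZMod c') * (((Φ t).2⁻¹ : (ZMod c')ˣ) : ZMod c') := by
      rw [map_add, map_mul, map_mul, map_intCast, map_intCast, ← hΦ2 t, ← hΦ2 t⁻¹]
      rw [map_inv Φ t]
      rfl
    rw [e1, e2]
  have hsum : kloos (q * c') n m = (∑ a : (ZMod q)ˣ, f a) * (∑ b : (ZMod c')ˣ, g b) := by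
    unfold kloos
    rw [Fintype.sum_equiv Φ.toEquiv _ (fun p => f p.1 * g p.2) (fun t => hterm t)]
    rw [Fintype.sum_prod_type, ← Finset.sum_mul_sum]
  rw [hsum]
  -- now identify the two factors
  have hvq : (v : ZMod c') * (q : ZMod c') = 1 := by
    have : ((u * c' + v * q : ℤ) : ZMod c') = ((1 : ℤ) : ZMod c') := by rw [huv]
    push_cast at this
    rwa [ZMod.natCast_self, mul_zero, zero_add] at this
  have hg : (∑ b : (ZMod c')ˣ, g b) = kloos c' (n * v) h' := by
    unfold kloos
    apply Fintype.sum_congr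
    intro b
    show eZMod c' _ = eZMod c' _
    congr 1
    push_cast [hmdef]
    linear_combination ((h' : ZMod c') * ((b⁻¹ : (ZMod c')ˣ) : ZMod c')) * hvq
  have huc : (u : ZMod q) * (c' : ZMod q) = 1 := by
    have : ((u * c' + v * q : ℤ) : ZMod q) = ((1 : ℤ) : ZMod q) := by rw [huv]
    push_cast at this
    rwa [ZMod.natCast_self, mul_zero, add_zero] at this
  have hw : IsUnit ((u : ℤ) : ZMod q) := IsUnit.of_mul_eq_one _ huc
  have hf : (∑ a : (ZMod q)ˣ, f a) = kloos q 0 n := by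
    unfold kloos
    let w : (ZMod q)ˣ := hw.unit
    have hwv : (w : ZMod q) = ((u : ℤ) : ZMod q) := hw.unit_spec
    refine Fintype.sum_equiv ((Equiv.mulLeft w).trans (Equiv.inv _)) _ _ ?_
    intro a
    show f a = eZMod q _
    simp only [f, Equiv.trans_apply, Equiv.coe_mulLeft, Equiv.inv_apply, inv_inv]
    congr 1
    have hm0 : ((m : ℤ) : ZMod q) = 0 := by
      rw [hmdef]; push_cast; rw [ZMod.natCast_self, zero_mul]
    rw [hm0, zero_mul, add_zero, Int.cast_zero, zero_mul, zero_add]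
    rw [Units.val_mul, hwv]
    ring
  rw [hg, hf]
  ring


/-- If `q` is prime, `gcd(c,q) = 1` and `gcd(cr/l, q) = 1` (with `l ∣ cr`), then
`S(n, qhr; q·cr/l) = S(n·q̄, hr; cr/l) · S(0, n; q)` where `q̄` inverts `q` mod `cr/l`. -/
theorem stmt5 (q c r l : ℕ) [Fact q.Prime] [NeZero (c * r / l)]
    (hl : l ∣ c * r) (hl0 : 0 < l)
    (hcq : Nat.Coprime c q) (hco : Nat.Coprime (c * r / l) q)
    (n h qbar : ℤ) (hqbar : ((c * r / l : ℕ) : ℤ) ∣ (q * qbar - 1)) :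
    kloos (q * (c * r / l)) n (q * h * r)
      = kloos (c * r / l) (n * qbar) (h * r) * kloos q 0 n := by
  haveI : NeZero q := ⟨(Fact.out : q.Prime).ne_zero⟩
  obtain ⟨k, hk⟩ := hqbar
  have huv : (-k) * ((c * r / l : ℕ) : ℤ) + qbar * q = 1 := by linear_combination hk
  have := kloos_mul_eq q (c * r / l) hco.symm n (h * r) (-k) qbar huv
  rw [show (q : ℤ) * h * r = q * (h * r) by ring]
  exact this
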